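/- Let A be a C*-algebra and let I and J be closed two-sided ideals of A. Then the set of sums I + J = {x + y : x ∈ I, y ∈ J} is a closed two-sided ideal of A; in particular, the sum of two closed two-sided ideals of a C*-algebra is already norm-closed. -/

import Mathlib

open scoped NNReal
open Unitization

lemma key_approx {A : Type*} [NonUnitalCStarAlgebra A] (y : A) {ε : ℝ≥0} (hε : 0 < ε) :
    ∃ e : A, (∃ c₀ : ℂ, ∃ c₁ : A, e = c₀ • (star y * y) + (star y * y) * c₁) ∧
      ∀ x : A, ‖x - x * e‖ ≤ ‖x + y‖ + ε := by
  set t : ℝ≥0 := ε ^ 2 with ht_def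
  have ht : 0 < t := pow_pos hε 2
  set b : A := star y * y with hb_def
  set β : Unitization ℂ A := (b : Unitization ℂ A) with hβ_def
  have hsYY : star (y : Unitization ℂ A) * (y : Unitization ℂ A) = β := by
    rw [hβ_def, hb_def, inr_mul, inr_star]
  have hβ : 0 ≤ β := by
    rw [← hsYY]; exact star_mul_self_nonneg _
  set g : ℝ≥0 → ℝ≥0 := fun s => (s + t)⁻¹ with hg_def
  set f : ℝ≥0 → ℝ≥0 := fun s => s * g s with hf_def
  have hgc : ∀ (S : Set ℝ≥0), ContinuousOn g S := fun S =>
    ContinuousOn.inv₀ (by fun_prop) (fun s _ => by positivity)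
  have hfc : ∀ (S : Set ℝ≥0), ContinuousOn f S := fun S => (continuousOn_id' S).mul (hgc S)
  have hf_le_one : ∀ s : ℝ≥0, f s ≤ 1 := fun s => by
    rw [hf_def]
    simp only [hg_def, ← div_eq_mul_inv]
    exact div_le_one_of_le₀ (le_add_right le_rfl) zero_le
  have hone_sub : ∀ s : ℝ≥0, 1 - f s = t * g s := fun s => by
    have hst : s + t ≠ 0 := by positivity
    refine tsub_eq_of_eq_add ?_
    have h1 : t * g s + f s = 1 := by
      show t * (s + t)⁻¹ + s * (s + t)⁻¹ = 1
      rw [← add_mul, add_comm t s, mul_inv_cancel₀ hst]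
    rw [h1]
  set w : Unitization ℂ A := cfc g β with hw_def
  set E : Unitization ℂ A := cfc f β with hE_def
  have hE : E = β * w := by
    rw [hE_def, hf_def, hw_def, cfc_mul (fun s : ℝ≥0 => s) g β (continuousOn_id' _) (hgc _),
      cfc_id' ℝ≥0 β hβ]
  have hone : (1 : Unitization ℂ A) - E = cfc (fun s => 1 - f s) β := by
    rw [cfc_tsub (fun _ => 1) f β (fun s _ => hf_le_one s) hβ
      continuousOn_const (hfc _), cfc_const_one ℝ≥0 β hβ, hE_def]
  have honesa : (0 : Unitization ℂ A) ≤ 1 - E := by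
    rw [hone]; exact cfc_predicate _ β
  have hone_norm : ‖(1 : Unitization ℂ A) - E‖ ≤ 1 := by
    rw [hone, ← NNReal.coe_one, ← coe_nnnorm, NNReal.coe_le_coe]
    exact nnnorm_cfc_nnreal_le (fun s _ => tsub_le_self)
  have hprod : ((1 : Unitization ℂ A) - E) * β * (1 - E)
      = cfc (fun s => (1 - f s) * s * (1 - f s)) β := by
    rw [cfc_mul (fun s => (1 - f s) * s) (fun s => 1 - f s) β
        ((continuousOn_const.sub (hfc _)).mul (continuousOn_id' _))
        (continuousOn_const.sub (hfc _)),
      cfc_mul (fun s => 1 - f s) (fun s : ℝ≥0 => s) β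
        (continuousOn_const.sub (hfc _)) (continuousOn_id' _),
      cfc_id' ℝ≥0 β hβ, ← hone]
  have hprod_norm : ‖((1 : Unitization ℂ A) - E) * β * (1 - E)‖ ≤ (ε : ℝ) ^ 2 := by
    have : ‖((1 : Unitization ℂ A) - E) * β * (1 - E)‖₊ ≤ t := by
      rw [hprod]
      refine nnnorm_cfc_nnreal_le (fun s _ => ?_)
      rw [hone_sub s]
      calc t * g s * s * (t * g s) = (t * (s * g s)) * (t * g s) := by ring
      _ ≤ (t * 1) * 1 := by
          refine mul_le_mul' (mul_le_mul' le_rfl ?_) ?_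
          · show s * (s + t)⁻¹ ≤ 1
            rw [← div_eq_mul_inv]
            exact div_le_one_of_le₀ (le_add_right le_rfl) zero_le
          · show t * (s + t)⁻¹ ≤ 1
            rw [← div_eq_mul_inv]
            exact div_le_one_of_le₀ (le_add_left le_rfl) zero_le
      _ = t := by ring
    calc ‖((1 : Unitization ℂ A) - E) * β * (1 - E)‖ ≤ (t : ℝ) := by
          rw [← coe_nnnorm]; exact_mod_cast this
    _ = (ε : ℝ) ^ 2 := by rw [ht_def]; push_cast; ring
  have hEfst : E.fst = 0 := by
    rw [hE, fst_mul, hβ_def, fst_inr, zero_mul]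
  set e : A := E.snd with he_def
  have hEe : (e : Unitization ℂ A) = E := by
    have h := inl_fst_add_inr_snd_eq E
    rwa [hEfst, inl_zero, zero_add] at h
  refine ⟨e, ⟨w.fst, w.snd, ?_⟩, ?_⟩
  · rw [he_def, hE, snd_mul, hβ_def, fst_inr, snd_inr, zero_smul, zero_add, hb_def]
  · intro x
    have hyE : ‖(y : Unitization ℂ A) * (1 - E)‖ ≤ (ε : ℝ) := by
      have hsq : ‖(y : Unitization ℂ A) * (1 - E)‖ ^ 2
          = ‖((1 : Unitization ℂ A) - E) * β * (1 - E)‖ := by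
        rw [sq, ← CStarRing.norm_star_mul_self (x := (y : Unitization ℂ A) * (1 - E))]
        congr 1
        rw [star_mul, (IsSelfAdjoint.of_nonneg honesa).star_eq]
        calc (1 - E) * star (y : Unitization ℂ A) * ((y : Unitization ℂ A) * (1 - E))
            = (1 - E) * (star (y : Unitization ℂ A) * (y : Unitization ℂ A)) * (1 - E) := by
              noncomm_ring
        _ = (1 - E) * β * (1 - E) := by rw [hsYY]
      have h2 : ‖(y : Unitization ℂ A) * (1 - E)‖ ^ 2 ≤ (ε : ℝ) ^ 2 := by
        rw [hsq]; exact hprod_norm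
      nlinarith [norm_nonneg ((y : Unitization ℂ A) * (1 - E)), NNReal.coe_pos.mpr hε]
    have hxe : ((x - x * e : A) : Unitization ℂ A)
        = ((x + y : A) : Unitization ℂ A) * (1 - E) - (y : Unitization ℂ A) * (1 - E) := by
      rw [inr_sub, inr_mul, hEe, inr_add]
      noncomm_ring
    calc ‖x - x * e‖ = ‖((x - x * e : A) : Unitization ℂ A)‖ := (norm_inr _).symm
    _ = ‖((x + y : A) : Unitization ℂ A) * (1 - E) - (y : Unitization ℂ A) * (1 - E)‖ := by
        rw [hxe]
    _ ≤ ‖((x + y : A) : Unitization ℂ A) * (1 - E)‖ + ‖(y : Unitization ℂ A) * (1 - E)‖ :=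
        norm_sub_le _ _
    _ ≤ ‖((x + y : A) : Unitization ℂ A)‖ * ‖(1 : Unitization ℂ A) - E‖ + (ε : ℝ) := by
        gcongr; exact norm_mul_le _ _
    _ ≤ ‖((x + y : A) : Unitization ℂ A)‖ * 1 + (ε : ℝ) := by
        gcongr
    _ = ‖x + y‖ + (ε : ℝ) := by rw [mul_one, norm_inr]
/-- A subset of a C*-algebra is a closed two-sided ideal. -/
def IsClosedTwoSidedIdeal {A : Type*} [NonUnitalNormedRing A] [NormedSpace ℂ A]
    (I : Set A) : Prop :=
  IsClosed I ∧ (0 : A) ∈ I ∧ (∀ x ∈ I, ∀ y ∈ I, x + y ∈ I) ∧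
    (∀ (c : ℂ), ∀ x ∈ I, c • x ∈ I) ∧
    (∀ a : A, ∀ x ∈ I, a * x ∈ I) ∧ (∀ a : A, ∀ x ∈ I, x * a ∈ I)

/-- The sum of two closed two-sided ideals of a C*-algebra is a closed two-sided
ideal; in particular, the set of sums is already norm-closed. -/
theorem stmt7
    {A : Type*} [NonUnitalNormedRing A] [StarRing A] [CStarRing A] [CompleteSpace A]
    [NormedSpace ℂ A] [IsScalarTower ℂ A A] [SMulCommClass ℂ A A] [StarModule ℂ A]
    (I J : Set A) (hI : IsClosedTwoSidedIdeal I) (hJ : IsClosedTwoSidedIdeal J) :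
    IsClosedTwoSidedIdeal {z : A | ∃ x ∈ I, ∃ y ∈ J, z = x + y} := by
  letI : NonUnitalCStarAlgebra A := {}
  obtain ⟨hIc, hI0, hIadd, hIsmul, hIl, hIr⟩ := hI
  obtain ⟨hJc, hJ0, hJadd, hJsmul, hJl, hJr⟩ := hJ
  have hIneg : ∀ x ∈ I, -x ∈ I := fun x hx => by
    simpa using hIsmul (-1) x hx
  have hIsub : ∀ x ∈ I, ∀ y ∈ I, x - y ∈ I := fun x hx y hy => by
    simpa [sub_eq_add_neg] using hIadd x hx (-y) (hIneg y hy)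
  have hJneg : ∀ x ∈ J, -x ∈ J := fun x hx => by
    simpa using hJsmul (-1) x hx
  have hJsub : ∀ x ∈ J, ∀ y ∈ J, x - y ∈ J := fun x hx y hy => by
    simpa [sub_eq_add_neg] using hJadd x hx (-y) (hJneg y hy)
  -- key approximation: distance from `x ∈ I` to `I ∩ J` is at most `‖x + y‖` for `y ∈ J`
  have key : ∀ x ∈ I, ∀ y ∈ J, ∀ ε : ℝ, 0 < ε →
      ∃ c, c ∈ I ∧ c ∈ J ∧ ‖x - c‖ ≤ ‖x + y‖ + ε := by
    intro x hx y hy ε hε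
    obtain ⟨e, ⟨c₀, c₁, hdecomp⟩, hbd⟩ := key_approx y (ε := ⟨ε, hε.le⟩) (by exact_mod_cast hε)
    have hbJ : star y * y ∈ J := hJl (star y) y hy
    have heJ : e ∈ J := by
      rw [hdecomp]
      exact hJadd _ (hJsmul c₀ _ hbJ) _ (hJr c₁ _ hbJ)
    exact ⟨x * e, hIr e x hx, hJl x e heJ, hbd x⟩
  refine ⟨?_, ⟨0, hI0, 0, hJ0, by simp⟩, ?_, ?_, ?_, ?_⟩
  · -- closedness
    refine isClosed_of_closure_subset fun z hz => ?_
    have hzn : ∀ n : ℕ, ∃ p, (∃ x ∈ I, ∃ y ∈ J, p = x + y) ∧ ‖z - p‖ ≤ (1/2 : ℝ)^n := by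
      intro n
      rcases Metric.mem_closure_iff.mp hz ((1/2 : ℝ)^n) (by positivity) with ⟨p, hp, hd⟩
      exact ⟨p, hp, by rw [← dist_eq_norm]; exact hd.le⟩
    choose zs hzsK hzs using hzn
    choose a ha b hb hab using hzsK
    have hzdiff : ∀ n, ‖zs (n+1) - zs n‖ ≤ 2 * (1/2 : ℝ)^n := by
      intro n
      calc ‖zs (n+1) - zs n‖ = ‖(zs (n+1) - z) + (z - zs n)‖ := by
            rw [sub_add_sub_cancel]
      _ ≤ ‖zs (n+1) - z‖ + ‖z - zs n‖ := norm_add_le _ _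
      _ ≤ (1/2 : ℝ)^(n+1) + (1/2 : ℝ)^n := by
          rw [norm_sub_rev]
          exact add_le_add (hzs (n+1)) (hzs n)
      _ ≤ 2 * (1/2 : ℝ)^n := by
          rw [pow_succ]
          nlinarith [pow_pos (by norm_num : (0:ℝ) < 1/2) n]
    have key' : ∀ n : ℕ, ∃ c, c ∈ I ∧ c ∈ J ∧
        ‖(a (n+1) - a n) - c‖ ≤ 3 * (1/2 : ℝ)^n := by
      intro n
      obtain ⟨c, hcI, hcJ, hc⟩ := key (a (n+1) - a n)
        (hIsub _ (ha (n+1)) _ (ha n)) (b (n+1) - b n)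
        (hJsub _ (hb (n+1)) _ (hb n)) ((1/2 : ℝ)^n) (by positivity)
      refine ⟨c, hcI, hcJ, hc.trans ?_⟩
      have : (a (n+1) - a n) + (b (n+1) - b n) = zs (n+1) - zs n := by
        rw [hab (n+1), hab n]; abel
      rw [this]
      have := hzdiff n
      linarith
    choose c hcI hcJ hc using key'
    set x : ℕ → A := fun n => a n - ∑ i ∈ Finset.range n, c i with hx_def
    have hsumI : ∀ n, (∑ i ∈ Finset.range n, c i) ∈ I := by
      intro n
      induction n with
      | zero => simpa using hI0
      | succ k ih =>
        rw [Finset.sum_range_succ]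
        exact hIadd _ ih _ (hcI k)
    have hsumJ : ∀ n, (∑ i ∈ Finset.range n, c i) ∈ J := by
      intro n
      induction n with
      | zero => simpa using hJ0
      | succ k ih =>
        rw [Finset.sum_range_succ]
        exact hJadd _ ih _ (hcJ k)
    have hxI : ∀ n, x n ∈ I := fun n => hIsub _ (ha n) _ (hsumI n)
    have hxd : ∀ n, ‖x (n+1) - x n‖ ≤ 3 * (1/2 : ℝ)^n := by
      intro n
      have : x (n+1) - x n = (a (n+1) - a n) - c n := by
        rw [hx_def]
        simp only [Finset.sum_range_succ]
        abel
      rw [this]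
      exact hc n
    have hcauchy : CauchySeq x := by
      refine cauchySeq_of_le_geometric (1/2 : ℝ) 3 (by norm_num) (fun n => ?_)
      rw [dist_eq_norm, norm_sub_rev]
      exact hxd n
    obtain ⟨l, hl⟩ := cauchySeq_tendsto_of_complete hcauchy
    have hlI : l ∈ I := hIc.mem_of_tendsto hl (Filter.Eventually.of_forall hxI)
    have hyJ : ∀ n, zs n - x n ∈ J := by
      intro n
      have : zs n - x n = b n + ∑ i ∈ Finset.range n, c i := by
        rw [hx_def, hab n]; beta_reduce; abel
      rw [this]
      exact hJadd _ (hb n) _ (hsumJ n)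
    have hzs_tendsto : Filter.Tendsto zs Filter.atTop (nhds z) := by
      rw [tendsto_iff_norm_sub_tendsto_zero]
      refine squeeze_zero (fun n => norm_nonneg _) (fun n => ?_)
        (tendsto_pow_atTop_nhds_zero_of_lt_one (r := (1/2 : ℝ)) (by norm_num) (by norm_num))
      rw [norm_sub_rev]
      exact hzs n
    have hdiff : Filter.Tendsto (fun n => zs n - x n) Filter.atTop (nhds (z - l)) :=
      hzs_tendsto.sub hl
    have hzlJ : z - l ∈ J := hJc.mem_of_tendsto hdiff (Filter.Eventually.of_forall hyJ)
    exact ⟨l, hlI, z - l, hzlJ, by abel⟩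
  · -- addition
    rintro _ ⟨x₁, hx₁, y₁, hy₁, rfl⟩ _ ⟨x₂, hx₂, y₂, hy₂, rfl⟩
    exact ⟨x₁ + x₂, hIadd _ hx₁ _ hx₂, y₁ + y₂, hJadd _ hy₁ _ hy₂, by abel⟩
  · -- scalar multiplication
    rintro cc _ ⟨x₁, hx₁, y₁, hy₁, rfl⟩
    exact ⟨cc • x₁, hIsmul cc _ hx₁, cc • y₁, hJsmul cc _ hy₁, by rw [smul_add]⟩
  · -- left multiplication
    rintro aa _ ⟨x₁, hx₁, y₁, hy₁, rfl⟩
    exact ⟨aa * x₁, hIl aa _ hx₁, aa * y₁, hJl aa _ hy₁, by rw [mul_add]⟩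
  · -- right multiplication
    rintro aa _ ⟨x₁, hx₁, y₁, hy₁, rfl⟩
    exact ⟨x₁ * aa, hIr aa _ hx₁, y₁ * aa, hJr aa _ hy₁, by rw [add_mul]⟩
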